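/- arXiv:0906.3330 — 3 statements merged into one kernel-verified Lean document; each statement's English description precedes it below -/
import Mathlib

section
/- The left Kan extension functor Lan_N : (𝔅A ⥤ [Cᵒᵖ, Type]) ⥤ ([Aᵒᵖ, Type] ⥤ [Cᵒᵖ, Type]), given by pointwise left Kan extension along N (which exists since 𝔅A is small and [Cᵒᵖ, Type] is cocomplete), is a conservative functor: if a natural transformation α between functors 𝔅A ⥤ [Cᵒᵖ, Type] becomes an isomorphism after applying Lan_N, then α is an isomorphism. -/
open CategoryTheory Limits

universe u

noncomputable section

variable (A : Type u) [SmallCategory A]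

/-- An object of the free finite-coproduct completion `Fam A` of `A`:
a finite family of objects of `A`. -/
structure FamObj : Type u where
  n : ℕ
  fam : Fin n → A

variable {A}

/-- The presheaf associated to an object of `Fam A`: the corresponding finite coproduct
of representables in `[Aᵒᵖ, Type]`. -/
def FamObj.presheaf (x : FamObj A) : Aᵒᵖ ⥤ Type u :=
  ∐ fun i => yoneda.obj (x.fam i)

variable (A)

/-- The free finite-coproduct completion of `A`, realized as the (induced) full subcategory
of `[Aᵒᵖ, Type]` spanned by finite coproducts of representables. -/
def Fam : Type u := InducedCategory (Aᵒᵖ ⥤ Type u) (FamObj.presheaf (A := A))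

instance : Category (Fam A) := InducedCategory.instCategory

/-- The groupoid `𝔅A`: the core of the free finite-coproduct completion of `A`,
i.e. the groupoid of all isomorphisms in `Fam A`. -/
def BGrpd : Type u := CategoryTheory.Core (Fam A)

instance : Groupoid (BGrpd A) := inferInstanceAs (Groupoid (Core (Fam A)))

/-- The canonical "inclusion" functor `N : 𝔅A ⥤ [Aᵒᵖ, Type]`. -/
def N : BGrpd A ⥤ (Aᵒᵖ ⥤ Type u) :=
  Core.inclusion (Fam A) ⋙ inducedFunctor (FamObj.presheaf (A := A))

variable {A}

/-- A presheaf isomorphism between `N`-images lifts to a morphism of the core groupoid. -/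
def coreHom {x y : BGrpd A} (φ : (N A).obj x ⟶ (N A).obj y) (h : IsIso φ) : x ⟶ y :=
  CoreHom.mk (InducedCategory.isoMk (X := x.of) (Y := y.of)
    (@asIso _ _ ((N A).obj x) ((N A).obj y) φ h))

lemma N_map_coreHom {x y : BGrpd A} (φ : (N A).obj x ⟶ (N A).obj y) (h : IsIso φ) :
    (N A).map (coreHom φ h) = φ := rfl

lemma coreHom_id (x : BGrpd A) (h : IsIso (𝟙 ((N A).obj x))) :
    coreHom (𝟙 ((N A).obj x)) h = 𝟙 x := Core.hom_ext rfl


lemma coreHom_eq_of_map_eq {x y : BGrpd A} (φ : (N A).obj x ⟶ (N A).obj y) (h : IsIso φ)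
    (ψ : x ⟶ y) (hψ : (N A).map ψ = φ) : coreHom φ h = ψ :=
  Core.hom_ext (InducedCategory.hom_ext hψ.symm)

open scoped Classical in
/-- The retraction cocone: on the connected component of the identity it is given by the
functor itself, elsewhere it is constant. -/
def retrCocone (C : Type u) [SmallCategory C] (h : BGrpd A ⥤ (Cᵒᵖ ⥤ Type u)) (x₀ : BGrpd A)
    (c : Cᵒᵖ) :
    Cocone ((CostructuredArrow.proj (N A) ((N A).obj x₀) ⋙ h) ⋙ (evaluation Cᵒᵖ (Type u)).obj c) where
  pt := (h.obj x₀).obj c ⊕ PUnit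
  ι :=
  { app := fun j => TypeCat.ofHom fun s =>
      if hj : IsIso j.hom then Sum.inl ((h.map (coreHom j.hom hj)).app c s)
      else Sum.inr PUnit.unit
    naturality := fun j j' χ => by
      ext s
      have hNχ : IsIso ((N A).map χ.left) := inferInstance
      by_cases hj' : IsIso j'.hom
      · have hj : IsIso j.hom := by
          rw [← CostructuredArrow.w χ]
          exact IsIso.comp_isIso
        have hcomp : coreHom j.hom hj = χ.left ≫ coreHom j'.hom hj' :=
          Core.hom_ext (InducedCategory.hom_ext (CostructuredArrow.w χ).symm)
        simp only [Functor.comp_obj, Functor.comp_map, CostructuredArrow.proj_obj,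
          CostructuredArrow.proj_map, evaluation_obj_obj, evaluation_obj_map,
          types_comp_apply, Category.comp_id, types_id_apply, Functor.const_obj_map,
          TypeCat.Fun.toFun_apply, TypeCat.ofHom_apply]
        rw [dif_pos hj, dif_pos hj', hcomp, h.map_comp]
        rfl
      · have hj : ¬ IsIso j.hom := by
          intro hh
          apply hj'
          rw [← CostructuredArrow.w χ] at hh
          exact @IsIso.of_isIso_comp_left _ _ _ _ _ ((N A).map χ.left) j'.hom _ hh
        simp only [Functor.comp_obj, Functor.comp_map, CostructuredArrow.proj_obj,
          CostructuredArrow.proj_map, evaluation_obj_obj, evaluation_obj_map,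
          types_comp_apply, Category.comp_id, types_id_apply, Functor.const_obj_map,
          TypeCat.Fun.toFun_apply, TypeCat.ofHom_apply]
        rw [dif_neg hj, dif_neg hj']; rfl }

lemma leg_comm (C : Type u) [SmallCategory C] {f g : BGrpd A ⥤ (Cᵒᵖ ⥤ Type u)} (α : f ⟶ g)
    {x₀ : BGrpd A} (j : CostructuredArrow (N A) ((N A).obj x₀)) :
    (((N A).lanUnit.app f).app j.left ≫ ((N A).lan.obj f).map j.hom) ≫
        ((N A).lan.map α).app ((N A).obj x₀) =
      α.app j.left ≫ (((N A).lanUnit.app g).app j.left ≫ ((N A).lan.obj g).map j.hom) := by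
  have h1 := ((N A).lan.map α).naturality j.hom
  have h2 := congr_app ((N A).lanUnit.naturality α) j.left
  dsimp at h1 h2 ⊢
  rw [Category.assoc, h1, ← Category.assoc, ← h2, Category.assoc]

open scoped Classical in
lemma retrCocone_ι_app_apply (C : Type u) [SmallCategory C] (h : BGrpd A ⥤ (Cᵒᵖ ⥤ Type u))
    (x₀ : BGrpd A) (c : Cᵒᵖ) (j : CostructuredArrow (N A) ((N A).obj x₀))
    (s : (h.obj j.left).obj c) :
    (retrCocone C h x₀ c).ι.app j s = if hj : IsIso j.hom then
      Sum.inl ((h.map (coreHom j.hom hj)).app c s) else Sum.inr PUnit.unit := rfl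

open scoped Classical in
lemma retrCocone_ι_mk_id (C : Type u) [SmallCategory C] (h : BGrpd A ⥤ (Cᵒᵖ ⥤ Type u))
    (x₀ : BGrpd A) (c : Cᵒᵖ) (s : (h.obj x₀).obj c) :
    (retrCocone C h x₀ c).ι.app (CostructuredArrow.mk (𝟙 ((N A).obj x₀))) s = Sum.inl s := by
  rw [retrCocone_ι_app_apply, CostructuredArrow.mk_hom_eq_self]
  rw [dif_pos (inferInstance : IsIso (𝟙 ((N A).obj x₀)))]
  rw [coreHom_eq_of_map_eq _ _ (𝟙 x₀) (by simp)]
  simp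
  rfl

variable (A)

/-- The left Kan extension functor
`Lan_N : (𝔅A ⥤ [Cᵒᵖ, Type]) ⥤ ([Aᵒᵖ, Type] ⥤ [Cᵒᵖ, Type])`, given by pointwise left Kan
extension along `N`, is conservative: if a natural transformation `α` between functors
`𝔅A ⥤ [Cᵒᵖ, Type]` becomes an isomorphism after applying `Lan_N`, then `α` is an
isomorphism. -/
theorem lan_along_N_conservative (C : Type u) [SmallCategory C]
    {f g : BGrpd A ⥤ (Cᵒᵖ ⥤ Type u)} (α : f ⟶ g)
    (H : IsIso ((N A).lan.map α)) : IsIso α := by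
  have key : ∀ (x₀ : BGrpd A), IsIso (α.app x₀) := by
    intro x₀
    have key2 : ∀ (c : Cᵒᵖ), IsIso ((α.app x₀).app c) := by
      intro c
      rw [isIso_iff_bijective]
      have Pf := Functor.isPointwiseLeftKanExtensionOfIsLeftKanExtension
        ((N A).lan.obj f) ((N A).lanUnit.app f)
      have Pg := Functor.isPointwiseLeftKanExtensionOfIsLeftKanExtension
        ((N A).lan.obj g) ((N A).lanUnit.app g)
      let cf := ((evaluation Cᵒᵖ (Type u)).obj c).mapCocone
        ((Functor.LeftExtension.mk _ ((N A).lanUnit.app f)).coconeAt ((N A).obj x₀))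
      let cg := ((evaluation Cᵒᵖ (Type u)).obj c).mapCocone
        ((Functor.LeftExtension.mk _ ((N A).lanUnit.app g)).coconeAt ((N A).obj x₀))
      have colf : IsColimit cf :=
        isColimitOfPreserves ((evaluation Cᵒᵖ (Type u)).obj c) (Pf ((N A).obj x₀))
      have colg : IsColimit cg :=
        isColimitOfPreserves ((evaluation Cᵒᵖ (Type u)).obj c) (Pg ((N A).obj x₀))
      have hcf : ∀ (j : CostructuredArrow (N A) ((N A).obj x₀)),
          cf.ι.app j = (((N A).lanUnit.app f).app j.left ≫
            ((N A).lan.obj f).map j.hom).app c := fun _ => rfl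
      have hcg : ∀ (j : CostructuredArrow (N A) ((N A).obj x₀)),
          cg.ι.app j = (((N A).lanUnit.app g).app j.left ≫
            ((N A).lan.obj g).map j.hom).app c := fun _ => rfl
      set Lα : (((N A).lan.obj f).obj ((N A).obj x₀)).obj c ⟶
          (((N A).lan.obj g).obj ((N A).obj x₀)).obj c :=
        (((N A).lan.map α).app ((N A).obj x₀)).app c with hLα
      have hbij : Function.Bijective Lα := (isIso_iff_bijective _).mp inferInstance
      -- the main commutation: Lα ∘ (leg of cf at j) = (leg of cg at j) ∘ α
      have hcomm : ∀ (j : CostructuredArrow (N A) ((N A).obj x₀))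
          (s : (f.obj j.left).obj c),
          Lα (cf.ι.app j s) = cg.ι.app j ((α.app j.left).app c s) := by
        intro j s
        have := ConcreteCategory.congr_hom (congr_app (leg_comm C α j) c) s
        rw [hcf, hcg]
        exact this
      -- retractions
      let rf := colf.desc (retrCocone C f x₀ c)
      let rg := colg.desc (retrCocone C g x₀ c)
      have hrf : ∀ (j : CostructuredArrow (N A) ((N A).obj x₀))
          (s : (f.obj j.left).obj c),
          rf (cf.ι.app j s) = (retrCocone C f x₀ c).ι.app j s := fun j s =>
        ConcreteCategory.congr_hom (colf.fac (retrCocone C f x₀ c) j) s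
      have hrg : ∀ (j : CostructuredArrow (N A) ((N A).obj x₀))
          (s : (g.obj j.left).obj c),
          rg (cg.ι.app j s) = (retrCocone C g x₀ c).ι.app j s := fun j s =>
        ConcreteCategory.congr_hom (colg.fac (retrCocone C g x₀ c) j) s
      set e₀ : CostructuredArrow (N A) ((N A).obj x₀) :=
        CostructuredArrow.mk (𝟙 ((N A).obj x₀)) with he₀
      constructor
      · -- injectivity
        intro a b hab
        have ha := hcomm e₀ a
        have hb := hcomm e₀ b
        have h1 : Lα (cf.ι.app e₀ a) = Lα (cf.ι.app e₀ b) := by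
          rw [ha, hb]
          exact congr_arg _ hab
        have h2 : cf.ι.app e₀ a = cf.ι.app e₀ b := hbij.injective h1
        have h3 := congr_arg rf h2
        rw [hrf, hrf, retrCocone_ι_mk_id, retrCocone_ι_mk_id] at h3
        exact Sum.inl.inj h3
      · -- surjectivity
        intro b
        obtain ⟨t, ht⟩ := hbij.surjective (cg.ι.app e₀ b)
        obtain ⟨j, s, hs⟩ := Types.jointly_surjective _ colf t
        rw [← hs, hcomm j s] at ht
        have h4 := congr_arg rg ht
        rw [hrg, hrg, retrCocone_ι_mk_id] at h4
        by_cases hj : IsIso j.hom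
        · refine ⟨(f.map (coreHom j.hom hj)).app c s, ?_⟩
          have hnat := ConcreteCategory.congr_hom (congr_app (α.naturality (coreHom j.hom hj)) c) s
          dsimp at hnat
          refine Eq.trans hnat ?_
          have h5 : (retrCocone C g x₀ c).ι.app j ((α.app j.left).app c s) =
              Sum.inl ((g.map (coreHom j.hom hj)).app c ((α.app j.left).app c s)) := by
            rw [retrCocone_ι_app_apply]
            rw [dif_pos hj]
          rw [h5] at h4
          exact Sum.inl.inj h4
        · exfalso
          have h5 : (retrCocone C g x₀ c).ι.app j ((α.app j.left).app c s) =
              Sum.inr PUnit.unit := by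
            rw [retrCocone_ι_app_apply]
            rw [dif_neg hj]
          rw [h5] at h4
          cases h4
    exact NatIso.isIso_of_isIso_app _
  exact NatIso.isIso_of_isIso_app _

end
end

section
/- The Cayley functor (A ⥤ Type) ⥤ ((A ⥤ Type) ⥤ (A ⥤ Type)) sending f to the endofunctor f ⊛ − (Day convolution with f on the left) admits a strong monoidal structure from the Day convolution monoidal structure on A ⥤ Type to the composition monoidal structure on the endofunctor category of A ⥤ Type: the unit J is sent to an endofunctor isomorphic to the identity, and (f ⊛ g) ⊛ − is naturally isomorphic to the composite of f ⊛ − and g ⊛ −, coherently; moreover this Cayley functor is conservative. -/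
open CategoryTheory MonoidalCategory

universe u

variable {A : Type u} [SmallCategory A] [MonoidalCategory A]

/-- An element of the coend `∫^{x,y} A(x ⊗ y, c) × f(x) × g(y)` defining the
Day convolution `(f ⊛ g)(c)`. -/
structure DayEl (f g : A ⥤ Type u) (c : A) : Type u where
  X : A
  Y : A
  k : X ⊗ Y ⟶ c
  s : f.obj X
  t : g.obj Y

/-- The relation defining the coend `∫^{x,y} A(x ⊗ y, c) × f(x) × g(y)`. -/
inductive DayRel (f g : A ⥤ Type u) (c : A) : DayEl f g c → DayEl f g c → Prop
  | step {X X' Y Y' : A} (u : X ⟶ X') (v : Y ⟶ Y') (k : X' ⊗ Y' ⟶ c)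
      (s : f.obj X) (t : g.obj Y) :
      DayRel f g c ⟨X, Y, (u ⊗ₘ v) ≫ k, s, t⟩ ⟨X', Y', k, f.map u s, g.map v t⟩

/-- The Day convolution `(f ⊛ g)(c) = ∫^{x,y} A(x ⊗ y, c) × f(x) × g(y)` as a set. -/
def dayObj (f g : A ⥤ Type u) (c : A) : Type u := Quot (DayRel f g c)

/-- The Day convolution `f ⊛ g` of `f, g : A ⥤ Type`. -/
def dayFunctor (f g : A ⥤ Type u) : A ⥤ Type u where
  obj c := dayObj f g c
  map {c c'} h := TypeCat.ofHom (Quot.lift (fun e => Quot.mk _ ⟨e.X, e.Y, e.k ≫ h, e.s, e.t⟩)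
    (by
      rintro _ _ ⟨u, v, k, s, t⟩
      dsimp
      rw [Category.assoc]
      exact Quot.sound (DayRel.step u v (k ≫ h) s t)))
  map_id c := by
    ext e
    induction e using Quot.ind
    show Quot.mk _ _ = Quot.mk _ _
    simp
  map_comp {c c' c''} h h' := by
    ext e
    induction e using Quot.ind
    show Quot.mk _ _ = Quot.mk _ _
    simp

/-- Functoriality of the Day convolution in the left variable. -/
def dayMapL {f f' : A ⥤ Type u} (α : f ⟶ f') (g : A ⥤ Type u) :
    dayFunctor f g ⟶ dayFunctor f' g where
  app c := TypeCat.ofHom (Quot.lift (fun e => Quot.mk _ ⟨e.X, e.Y, e.k, α.app e.X e.s, e.t⟩)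
    (by
      rintro _ _ ⟨u, v, k, s, t⟩
      dsimp
      rw [FunctorToTypes.naturality]
      exact Quot.sound (DayRel.step u v k (α.app _ s) t)))
  naturality c c' h := by
    ext e
    induction e using Quot.ind
    rfl

/-- Functoriality of the Day convolution in the right variable. -/
def dayMapR (f : A ⥤ Type u) {g g' : A ⥤ Type u} (β : g ⟶ g') :
    dayFunctor f g ⟶ dayFunctor f g' where
  app c := TypeCat.ofHom (Quot.lift (fun e => Quot.mk _ ⟨e.X, e.Y, e.k, e.s, β.app e.Y e.t⟩)
    (by
      rintro _ _ ⟨u, v, k, s, t⟩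
      dsimp
      rw [FunctorToTypes.naturality]
      exact Quot.sound (DayRel.step u v k s (β.app _ t))))
  naturality c c' h := by
    ext e
    induction e using Quot.ind
    rfl

variable (A) in
/-- The Day convolution as a bifunctor `(A ⥤ Type) ⥤ (A ⥤ Type) ⥤ (A ⥤ Type)`. -/
def dayBi : (A ⥤ Type u) ⥤ (A ⥤ Type u) ⥤ (A ⥤ Type u) where
  obj f :=
    { obj := fun g => dayFunctor f g
      map := fun β => dayMapR f β
      map_id := by
        intro g
        ext c e
        induction e using Quot.ind
        rfl
      map_comp := by
        intro g g' g'' β β'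
        ext c e
        induction e using Quot.ind
        rfl }
  map {f f'} α :=
    { app := fun g => dayMapL α g
      naturality := by
        intro g g' β
        ext c e
        induction e using Quot.ind
        rfl }
  map_id f := by
    ext g c e
    induction e using Quot.ind
    rfl
  map_comp α α' := by
    ext g c e
    induction e using Quot.ind
    rfl

variable (A) in
/-- The unit for Day convolution: the covariant representable at the monoidal unit. -/
def dayUnit : A ⥤ Type u := coyoneda.obj (Opposite.op (𝟙_ A))

@[simp]
lemma dayFunctor_map_mk (f g : A ⥤ Type u) {c c' : A} (h : c ⟶ c') (e : DayEl f g c) :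
    (dayFunctor f g).map h (Quot.mk _ e) = Quot.mk _ ⟨e.X, e.Y, e.k ≫ h, e.s, e.t⟩ :=
  rfl

lemma dayStep {f g : A ⥤ Type u} {c : A} {X X' Y Y' : A} (u : X ⟶ X') (v : Y ⟶ Y')
    (k : X' ⊗ Y' ⟶ c) (s : f.obj X) (t : g.obj Y)
    {k' : X ⊗ Y ⟶ c} (hk : k' = (u ⊗ₘ v) ≫ k) {s' : f.obj X'} (hs : s' = f.map u s)
    {t' : g.obj Y'} (ht : t' = g.map v t) :
    Quot.mk (DayRel f g c) ⟨X, Y, k', s, t⟩ = Quot.mk (DayRel f g c) ⟨X', Y', k, s', t'⟩ := by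
  subst hk hs ht
  exact Quot.sound (DayRel.step u v k s t)

set_option maxHeartbeats 1000000 in
/-- The associator `(f ⊛ g) ⊛ h ≅ f ⊛ (g ⊛ h)` for Day convolution. -/
def dayAssoc (f g h : A ⥤ Type u) :
    dayFunctor (dayFunctor f g) h ≅ dayFunctor f (dayFunctor g h) where
  hom :=
    { app := fun c => TypeCat.ofHom (Quot.lift
        (fun e => Quot.lift
          (fun q => Quot.mk _ (⟨q.X, q.Y ⊗ e.Y,
              (α_ q.X q.Y e.Y).inv ≫ (q.k ▷ e.Y) ≫ e.k, q.s,
              Quot.mk _ ⟨q.Y, e.Y, 𝟙 _, q.t, e.t⟩⟩ : DayEl f (dayFunctor g h) c))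
          (by
            rintro _ _ ⟨u, v, l, s, s'⟩
            dsimp
            refine dayStep (g := dayFunctor g h) u (v ▷ e.Y) _ s _ ?_ rfl ?_
            · simp [MonoidalCategory.tensorHom_def]
            · rw [dayFunctor_map_mk]
              exact (dayStep v (𝟙 e.Y) (𝟙 _) s' e.t (by simp) rfl (by simp)).symm)
          e.s)
        (by
          rintro _ _ ⟨u, w, k, q, t⟩
          induction q using Quot.ind with | _ q =>
          obtain ⟨x, y, l, s, s'⟩ := q
          dsimp only [dayFunctor_map_mk]
          show Quot.mk _ _ = Quot.mk _ _
          refine dayStep (g := dayFunctor g h) (𝟙 x) (y ◁ w) _ s _ ?_ (by simp) ?_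
          · rw [id_tensorHom, associator_inv_naturality_right_assoc]
            simp only [comp_whiskerRight, Category.assoc, whisker_exchange_assoc]
            simp [MonoidalCategory.tensorHom_def]
          · rw [dayFunctor_map_mk]
            exact (dayStep (𝟙 y) w (𝟙 _) s' t (by simp) (by simp) rfl).symm))
      naturality := by
        intro c c' m
        ext e
        induction e using Quot.ind with | _ e =>
        obtain ⟨X, Y, k, q, t⟩ := e
        induction q using Quot.ind with | _ q =>
        show Quot.mk _ _ = Quot.mk _ _
        simp }
  inv :=
    { app := fun c => TypeCat.ofHom (Quot.lift
        (fun e => Quot.lift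
          (fun q => Quot.mk _ (⟨e.X ⊗ q.X, q.Y,
              (α_ e.X q.X q.Y).hom ≫ (e.X ◁ q.k) ≫ e.k,
              Quot.mk _ ⟨e.X, q.X, 𝟙 _, e.s, q.s⟩, q.t⟩ : DayEl (dayFunctor f g) h c))
          (by
            rintro _ _ ⟨u, v, l, s, s'⟩
            dsimp
            refine dayStep (f := dayFunctor f g) (e.X ◁ u) v _ _ s' ?_ ?_ rfl
            · rw [← id_tensorHom e.X u]
              rw [associator_naturality_assoc]
              simp [MonoidalCategory.tensorHom_def]
            · rw [dayFunctor_map_mk]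
              exact (dayStep (𝟙 e.X) u (𝟙 _) e.s s (by simp) (by simp) rfl).symm)
          e.t)
        (by
          rintro _ _ ⟨u, w, k, s, q⟩
          induction q using Quot.ind with | _ q =>
          obtain ⟨y, z, m, s', t⟩ := q
          dsimp only [dayFunctor_map_mk]
          show Quot.mk _ _ = Quot.mk _ _
          refine dayStep (f := dayFunctor f g) (u ▷ y) (𝟙 z) _ _ t ?_ ?_ (by simp)
          · rw [tensorHom_id, associator_naturality_left_assoc, ← whisker_exchange_assoc,
              tensorHom_def' u w]
            simp only [← MonoidalCategory.whiskerLeft_comp_assoc, Category.assoc]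
          · rw [dayFunctor_map_mk]
            exact (dayStep u (𝟙 y) (𝟙 _) s s' (by simp) rfl (by simp)).symm))
      naturality := by
        intro c c' m
        ext e
        induction e using Quot.ind with | _ e =>
        obtain ⟨X, Y, k, s, q⟩ := e
        induction q using Quot.ind with | _ q =>
        show Quot.mk _ _ = Quot.mk _ _
        simp }
  hom_inv_id := by
    ext c e
    induction e using Quot.ind with | _ e =>
    obtain ⟨X, Y, k, q, t⟩ := e
    induction q using Quot.ind with | _ q =>
    obtain ⟨x, y, l, s, s'⟩ := q
    show Quot.mk _ _ = Quot.mk _ _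
    exact dayStep (f := dayFunctor f g) l (𝟙 Y) k _ t (by simp)
      (by rw [dayFunctor_map_mk]; simp; rfl) (by simp)
  inv_hom_id := by
    ext c e
    induction e using Quot.ind with | _ e =>
    obtain ⟨X, W, k, s, q⟩ := e
    induction q using Quot.ind with | _ q =>
    obtain ⟨y, z, m, s', t⟩ := q
    show Quot.mk _ _ = Quot.mk _ _
    exact dayStep (g := dayFunctor g h) (𝟙 X) m k s _ (by simp)
      (by simp) (by rw [dayFunctor_map_mk]; simp; rfl)

@[simp]
lemma dayUnit_map {x y : A} (u : x ⟶ y) (s : (dayUnit A).obj x) :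
    (dayUnit A).map u s = (s : 𝟙_ A ⟶ x) ≫ u :=
  rfl

/-- The left unitor `J ⊛ f ≅ f` for Day convolution, where `J = A(I, −)`. -/
def dayLeftUnitor (f : A ⥤ Type u) : dayFunctor (dayUnit A) f ≅ f where
  hom :=
    { app := fun c => TypeCat.ofHom (Quot.lift
        (fun e => f.map ((λ_ e.Y).inv ≫ ((e.s : 𝟙_ A ⟶ e.X) ▷ e.Y) ≫ e.k) e.t)
        (by
          rintro _ _ ⟨u, v, k, s, t⟩
          dsimp
          rw [← FunctorToTypes.map_comp_apply]
          rw [leftUnitor_inv_naturality_assoc]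
          simp only [comp_whiskerRight, Category.assoc, whisker_exchange_assoc]
          simp [MonoidalCategory.tensorHom_def]
          erw [comp_whiskerRight]
          simp))
      naturality := by
        intro c c' m
        ext e
        induction e using Quot.ind with | _ e =>
        show f.map _ e.t = f.map m (f.map _ e.t)
        rw [← FunctorToTypes.map_comp_apply]
        simp }
  inv :=
    { app := fun c => TypeCat.ofHom (fun t => Quot.mk _ ⟨𝟙_ A, c, (λ_ c).hom, 𝟙 (𝟙_ A), t⟩)
      naturality := by
        intro c c' m
        ext t
        exact (dayStep (f := dayUnit A) (𝟙 (𝟙_ A)) m (λ_ c').hom (𝟙 _) t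
          (by rw [id_tensorHom, MonoidalCategory.leftUnitor_naturality])
          (by simp; rfl) rfl).symm }
  hom_inv_id := by
    ext c e
    induction e using Quot.ind with | _ e =>
    obtain ⟨X, Y, k, s, t⟩ := e
    show Quot.mk _ _ = Quot.mk _ _
    refine ((dayStep (f := dayUnit A) (𝟙 (𝟙_ A)) ((λ_ Y).inv ≫ ((s : 𝟙_ A ⟶ X) ▷ Y) ≫ k)
      (λ_ c).hom (𝟙 _) t rfl (by simp; rfl) rfl).symm).trans ?_
    refine dayStep (f := dayUnit A) (s : 𝟙_ A ⟶ X) (𝟙 Y) k (𝟙 _) t ?_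
      (Category.id_comp (s : 𝟙_ A ⟶ X)).symm (by simp)
    erw [id_tensorHom, MonoidalCategory.leftUnitor_naturality, Iso.hom_inv_id_assoc,
      tensorHom_id]
  inv_hom_id := by
    ext c t
    show f.map _ t = t
    simp

/-- The right unitor `f ⊛ J ≅ f` for Day convolution, where `J = A(I, −)`. -/
def dayRightUnitor (f : A ⥤ Type u) : dayFunctor f (dayUnit A) ≅ f where
  hom :=
    { app := fun c => TypeCat.ofHom (Quot.lift
        (fun e => f.map ((ρ_ e.X).inv ≫ (e.X ◁ (e.t : 𝟙_ A ⟶ e.Y)) ≫ e.k) e.s)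
        (by
          rintro _ _ ⟨u, v, k, s, t⟩
          dsimp
          rw [← FunctorToTypes.map_comp_apply]
          rw [rightUnitor_inv_naturality_assoc, ← whisker_exchange_assoc, tensorHom_def' u v]
          simp only [← MonoidalCategory.whiskerLeft_comp_assoc, Category.assoc]
          erw [MonoidalCategory.whiskerLeft_comp]
          simp))
      naturality := by
        intro c c' m
        ext e
        induction e using Quot.ind with | _ e =>
        show f.map _ e.s = f.map m (f.map _ e.s)
        rw [← FunctorToTypes.map_comp_apply]
        simp }
  inv :=
    { app := fun c => TypeCat.ofHom (fun s => Quot.mk _ ⟨c, 𝟙_ A, (ρ_ c).hom, s, 𝟙 (𝟙_ A)⟩)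
      naturality := by
        intro c c' m
        ext s
        exact (dayStep (g := dayUnit A) m (𝟙 (𝟙_ A)) (ρ_ c').hom s (𝟙 _)
          (by rw [tensorHom_id, MonoidalCategory.rightUnitor_naturality])
          rfl (by simp; rfl)).symm }
  hom_inv_id := by
    ext c e
    induction e using Quot.ind with | _ e =>
    obtain ⟨X, Y, k, s, t⟩ := e
    show Quot.mk _ _ = Quot.mk _ _
    refine ((dayStep (g := dayUnit A) ((ρ_ X).inv ≫ (X ◁ (t : 𝟙_ A ⟶ Y)) ≫ k) (𝟙 (𝟙_ A))
      (ρ_ c).hom s (𝟙 _) rfl rfl (by simp; rfl)).symm).trans ?_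
    refine dayStep (g := dayUnit A) (𝟙 X) (t : 𝟙_ A ⟶ Y) k s (𝟙 _) ?_ (by simp)
      (Category.id_comp (t : 𝟙_ A ⟶ Y)).symm
    erw [tensorHom_id, MonoidalCategory.rightUnitor_naturality, Iso.hom_inv_id_assoc,
      id_tensorHom]
  inv_hom_id := by
    ext c s
    show f.map _ s = s
    simp

variable (A) in
/-- The Cayley functor `(A ⥤ Type) ⥤ ((A ⥤ Type) ⥤ (A ⥤ Type))` sending `f` to the
endofunctor `f ⊛ −` (Day convolution with `f` on the left). -/
def cayley : (A ⥤ Type u) ⥤ (A ⥤ Type u) ⥤ (A ⥤ Type u) := dayBi A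

/-- The data of a strong monoidal structure on the Cayley functor
`f ↦ (f ⊛ −)`, from the Day convolution monoidal structure on `A ⥤ Type` to the
composition monoidal structure on the endofunctor category of `A ⥤ Type`: the unit `J` is
sent to an endofunctor isomorphic to the identity, and `(f ⊛ g) ⊛ −` is naturally
isomorphic to the composite of `f ⊛ −` and `g ⊛ −`, coherently. -/
structure CayleyMonoidalStructure (A : Type u) [SmallCategory A] [MonoidalCategory A] where
  /-- `J ⊛ − ≅ 𝟭` -/
  εIso : (cayley A).obj (dayUnit A) ≅ 𝟭 (A ⥤ Type u)
  /-- `(f ⊛ g) ⊛ − ≅ (f ⊛ −) ∘ (g ⊛ −)` -/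
  μIso : ∀ f g : A ⥤ Type u,
    (cayley A).obj (dayFunctor f g) ≅ (cayley A).obj g ⋙ (cayley A).obj f
  /-- naturality of `μIso` in the first variable -/
  μIso_natural_left : ∀ {f f' : A ⥤ Type u} (α : f ⟶ f') (g : A ⥤ Type u),
    (cayley A).map (dayMapL α g) ≫ (μIso f' g).hom
      = (μIso f g).hom ≫ CategoryTheory.Functor.whiskerLeft ((cayley A).obj g) ((cayley A).map α)
  /-- naturality of `μIso` in the second variable -/
  μIso_natural_right : ∀ (f : A ⥤ Type u) {g g' : A ⥤ Type u} (β : g ⟶ g'),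
    (cayley A).map (dayMapR f β) ≫ (μIso f g').hom
      = (μIso f g).hom ≫ CategoryTheory.Functor.whiskerRight ((cayley A).map β) ((cayley A).obj f)
  /-- compatibility with the associativity constraints (composition of endofunctors being
  strictly associative) -/
  associativity : ∀ f g h : A ⥤ Type u,
    (μIso (dayFunctor f g) h).hom
        ≫ CategoryTheory.Functor.whiskerLeft ((cayley A).obj h) (μIso f g).hom
      = (cayley A).map (dayAssoc f g h).hom ≫ (μIso f (dayFunctor g h)).hom
        ≫ CategoryTheory.Functor.whiskerRight (μIso g h).hom ((cayley A).obj f)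
  /-- compatibility with the left unit constraints -/
  left_unitality : ∀ f : A ⥤ Type u,
    (cayley A).map (dayLeftUnitor f).hom
      = (μIso (dayUnit A) f).hom
        ≫ CategoryTheory.Functor.whiskerLeft ((cayley A).obj f) εIso.hom
        ≫ ((cayley A).obj f).rightUnitor.hom
  /-- compatibility with the right unit constraints -/
  right_unitality : ∀ f : A ⥤ Type u,
    (cayley A).map (dayRightUnitor f).hom
      = (μIso f (dayUnit A)).hom
        ≫ CategoryTheory.Functor.whiskerRight εIso.hom ((cayley A).obj f)
        ≫ ((cayley A).obj f).leftUnitor.hom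

/-- The unit isomorphism `J ⊛ − ≅ 𝟭`. -/
def cayleyε : (cayley A).obj (dayUnit A) ≅ 𝟭 (A ⥤ Type u) :=
  NatIso.ofComponents (fun g => dayLeftUnitor g) (by
    intro g g' β
    ext c e
    induction e using Quot.ind with | _ e =>
    obtain ⟨X, Y, k, s, t⟩ := e
    exact (FunctorToTypes.naturality β _ t).symm)

/-- The multiplication isomorphism `(f ⊛ g) ⊛ − ≅ (g ⊛ −) ⋙ (f ⊛ −)`. -/
def cayleyμ (f g : A ⥤ Type u) :
    (cayley A).obj (dayFunctor f g) ≅ (cayley A).obj g ⋙ (cayley A).obj f :=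
  NatIso.ofComponents (fun h => dayAssoc f g h) (by
    intro h h' β
    ext c e
    induction e using Quot.ind with | _ e =>
    obtain ⟨X, Y, k, q, t⟩ := e
    induction q using Quot.ind with | _ q =>
    rfl)

lemma cayley_nat_left {f f' : A ⥤ Type u} (α : f ⟶ f') (g : A ⥤ Type u) :
    (cayley A).map (dayMapL α g) ≫ (cayleyμ f' g).hom
      = (cayleyμ f g).hom ≫ CategoryTheory.Functor.whiskerLeft ((cayley A).obj g) ((cayley A).map α) := by
  ext h c e
  induction e using Quot.ind with | _ e =>
  obtain ⟨X, Y, k, q, t⟩ := e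
  induction q using Quot.ind with | _ q =>
  rfl

lemma cayley_nat_right (f : A ⥤ Type u) {g g' : A ⥤ Type u} (β : g ⟶ g') :
    (cayley A).map (dayMapR f β) ≫ (cayleyμ f g').hom
      = (cayleyμ f g).hom ≫ CategoryTheory.Functor.whiskerRight ((cayley A).map β) ((cayley A).obj f) := by
  ext h c e
  induction e using Quot.ind with | _ e =>
  obtain ⟨X, Y, k, q, t⟩ := e
  induction q using Quot.ind with | _ q =>
  rfl

lemma cayley_assoc (f g h : A ⥤ Type u) :
    (cayleyμ (dayFunctor f g) h).hom
        ≫ CategoryTheory.Functor.whiskerLeft ((cayley A).obj h) (cayleyμ f g).hom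
      = (cayley A).map (dayAssoc f g h).hom ≫ (cayleyμ f (dayFunctor g h)).hom
        ≫ CategoryTheory.Functor.whiskerRight (cayleyμ g h).hom ((cayley A).obj f) := by
  ext e c el
  induction el using Quot.ind with | _ el =>
  obtain ⟨X, Y, k, Q, t⟩ := el
  induction Q using Quot.ind with | _ Q =>
  obtain ⟨P, R, m, q, r⟩ := Q
  induction q using Quot.ind with | _ q =>
  obtain ⟨x, y, l, s, s'⟩ := q
  show Quot.mk _ _ = Quot.mk _ _
  refine dayStep (𝟙 x) (α_ y R Y).inv _ s _ ?_ (by simp) ?_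
  · simp only [id_tensorHom]
    rw [associator_inv_naturality_left_assoc]
    simp only [comp_whiskerRight, Category.assoc, pentagon_inv_assoc]
  · rw [dayFunctor_map_mk]
    show Quot.mk _ _ = Quot.mk _ _
    exact congrArg (Quot.mk _) (by simp; rfl)

lemma cayley_left_unit (f : A ⥤ Type u) :
    (cayley A).map (dayLeftUnitor f).hom
      = (cayleyμ (dayUnit A) f).hom
        ≫ CategoryTheory.Functor.whiskerLeft ((cayley A).obj f) cayleyε.hom
        ≫ ((cayley A).obj f).rightUnitor.hom := by
  ext e c el
  induction el using Quot.ind with | _ el =>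
  obtain ⟨X, Y, k, q, t⟩ := el
  induction q using Quot.ind with | _ q =>
  obtain ⟨x, y, l, s, s'⟩ := q
  show Quot.mk _ _ = Quot.mk _ _
  refine (dayStep ((λ_ y).inv ≫ ((s : 𝟙_ A ⟶ x) ▷ y) ≫ l) (𝟙 Y) k s' t ?_ rfl (by simp)).symm
  erw [Category.id_comp, associator_inv_naturality_left_assoc, leftUnitor_tensor_inv]
  simp [tensorHom_id]

lemma cayley_right_unit (f : A ⥤ Type u) :
    (cayley A).map (dayRightUnitor f).hom
      = (cayleyμ f (dayUnit A)).hom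
        ≫ CategoryTheory.Functor.whiskerRight cayleyε.hom ((cayley A).obj f)
        ≫ ((cayley A).obj f).leftUnitor.hom := by
  ext e c el
  induction el using Quot.ind with | _ el =>
  obtain ⟨X, Y, k, q, t⟩ := el
  induction q using Quot.ind with | _ q =>
  obtain ⟨x, y, l, s, s'⟩ := q
  show Quot.mk _ _ = Quot.mk _ _
  refine ((dayStep (g := e) ((ρ_ x).inv ≫ (x ◁ (s' : 𝟙_ A ⟶ y)) ≫ l) (𝟙 Y) k s t ?_ rfl
      (by simp)).symm).trans
    (dayStep (𝟙 x) ((λ_ Y).inv ≫ ((s' : 𝟙_ A ⟶ y) ▷ Y) ≫ 𝟙 (y ⊗ Y))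
      ((α_ x y Y).inv ≫ (l ▷ Y) ≫ k) s t rfl (by simp) rfl)
  simp only [id_tensorHom, tensorHom_id, Category.comp_id, MonoidalCategory.whiskerLeft_comp,
    comp_whiskerRight, Category.assoc]
  erw [associator_inv_naturality_middle_assoc]
  coherence

lemma day_rightUnitor_natural {f g : A ⥤ Type u} (α : f ⟶ g) :
    dayMapL α (dayUnit A) ≫ (dayRightUnitor g).hom = (dayRightUnitor f).hom ≫ α := by
  ext c e
  induction e using Quot.ind with | _ e =>
  obtain ⟨X, Y, k, s, t⟩ := e
  exact (FunctorToTypes.naturality α _ s).symm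

/-- The Cayley functor `(A ⥤ Type) ⥤ ((A ⥤ Type) ⥤ (A ⥤ Type))` sending `f` to the
endofunctor `f ⊛ −` admits a strong monoidal structure from the Day convolution monoidal
structure on `A ⥤ Type` to the composition monoidal structure on the endofunctor category
of `A ⥤ Type`: the unit `J` is sent to an endofunctor isomorphic to the identity, and
`(f ⊛ g) ⊛ −` is naturally isomorphic to the composite of `f ⊛ −` and `g ⊛ −`, coherently;
moreover this Cayley functor is conservative. -/
theorem cayley_strong_monoidal_conservative :
    Nonempty (CayleyMonoidalStructure A) ∧
      ∀ {f g : A ⥤ Type u} (α : f ⟶ g), IsIso ((cayley A).map α) → IsIso α := by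
  refine ⟨⟨{ εIso := cayleyε
             μIso := cayleyμ
             μIso_natural_left := fun {f f'} α g => cayley_nat_left α g
             μIso_natural_right := fun f {g g'} β => cayley_nat_right f β
             associativity := cayley_assoc
             left_unitality := cayley_left_unit
             right_unitality := cayley_right_unit }⟩, ?_⟩
  intro f g α h
  have h1 : IsIso (((cayley A).map α).app (dayUnit A)) := inferInstance
  have h2 : dayMapL α (dayUnit A) = ((cayley A).map α).app (dayUnit A) := rfl
  have key : α = (dayRightUnitor f).inv ≫ ((cayley A).map α).app (dayUnit A)
      ≫ (dayRightUnitor g).hom := by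
    erw [← h2, day_rightUnitor_natural, Iso.inv_hom_id_assoc]
  rw [key]
  exact IsIso.comp_isIso' inferInstance (IsIso.comp_isIso' h1 (Iso.isIso_hom (dayRightUnitor g)))
end

section
/- The Cayley transform K̄ : (A ⥤ Type) ⥤ (Aᵒᵖ × A ⥤ Type), defined on objects by K̄(f)(a, b) = (Lan_{(− ⊗ a)} f)(b) = ∫^{x} A(x ⊗ a, b) × f(x) (contravariantly functorial in a, covariantly in b, and functorial in f), is conservative: if a natural transformation α : f ⟶ g of functors A ⥤ Type has K̄(α) an isomorphism, then α is an isomorphism. -/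
open CategoryTheory MonoidalCategory

universe u

variable {A : Type u} [SmallCategory A] [MonoidalCategory A]

/-- An element of the coend `∫^x A(x ⊗ a, b) × f(x)`. -/
structure KEl (f : A ⥤ Type u) (a b : A) : Type u where
  X : A
  k : X ⊗ a ⟶ b
  s : f.obj X

/-- The relation defining the coend `∫^x A(x ⊗ a, b) × f(x)`. -/
inductive KRel (f : A ⥤ Type u) (a b : A) : KEl f a b → KEl f a b → Prop
  | step {X X' : A} (u : X ⟶ X') (k : X' ⊗ a ⟶ b) (s : f.obj X) :
      KRel f a b ⟨X, (u ▷ a) ≫ k, s⟩ ⟨X', k, f.map u s⟩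

/-- The coend `∫^x A(x ⊗ a, b) × f(x)`, i.e. the value at `b` of the pointwise left Kan
extension of `f` along `− ⊗ a`. -/
def kObj (f : A ⥤ Type u) (a b : A) : Type u := Quot (KRel f a b)

variable (A) in
/-- The Cayley transform `K̄ : (A ⥤ Type) ⥤ (Aᵒᵖ × A ⥤ Type)`,
`K̄(f)(a, b) = (Lan_{(− ⊗ a)} f)(b) = ∫^x A(x ⊗ a, b) × f(x)`. -/
def Kbar : (A ⥤ Type u) ⥤ (Aᵒᵖ × A ⥤ Type u) where
  obj f :=
    { obj := fun p => kObj f p.1.unop p.2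
      map := fun {p q} h => TypeCat.ofHom <| Quot.lift
        (fun e => Quot.mk _ ⟨e.X, (e.X ◁ h.1.unop) ≫ e.k ≫ h.2, e.s⟩)
        (by
          rintro _ _ ⟨u, k, s⟩
          dsimp
          simp only [Category.assoc]
          rw [whisker_exchange_assoc]
          exact Quot.sound (KRel.step u ((_ ◁ h.1.unop) ≫ k ≫ h.2) s))
      map_id := by
        intro p
        ext e
        induction e using Quot.ind
        simp <;> rfl
      map_comp := by
        intro p q r h h'
        ext e
        induction e using Quot.ind
        change Quot.mk _ _ = Quot.mk (KRel f _ _) (KEl.mk _ (_ ◁ h'.1.unop ≫ (_ ◁ h.1.unop ≫ _ ≫ h.2) ≫ h'.2) _)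
        simp }
  map {f g} α :=
    { app := fun p => TypeCat.ofHom <| Quot.lift (fun e => Quot.mk _ ⟨e.X, e.k, α.app e.X e.s⟩)
        (by
          rintro _ _ ⟨u, k, s⟩
          dsimp
          rw [FunctorToTypes.naturality]
          exact Quot.sound (KRel.step u k (α.app _ s)))
      naturality := by
        intro p q h
        ext e
        induction e using Quot.ind
        rfl }
  map_id f := by
    ext p e
    induction e using Quot.ind
    rfl
  map_comp α β := by
    ext p e
    induction e using Quot.ind
    rfl

/-- The unit map `f b → ∫^x A(x ⊗ I, b) × f x`. -/
def kUnit (f : A ⥤ Type u) (b : A) : f.obj b ⟶ kObj f (𝟙_ A) b :=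
  TypeCat.ofHom fun s => Quot.mk _ ⟨b, (ρ_ b).hom, s⟩

/-- The counit map `∫^x A(x ⊗ I, b) × f x → f b`. -/
def kCounit (f : A ⥤ Type u) (b : A) : kObj f (𝟙_ A) b ⟶ f.obj b :=
  TypeCat.ofHom <| Quot.lift (fun e => f.map ((ρ_ e.X).inv ≫ e.k) e.s) (by
    rintro _ _ ⟨u, k, s⟩
    dsimp
    rw [← FunctorToTypes.map_comp_apply]
    rw [← Category.assoc, ← Category.assoc, rightUnitor_inv_naturality])

theorem kUnit_kCounit (f : A ⥤ Type u) (b : A) :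
    kUnit f b ≫ kCounit f b = 𝟙 _ := by
  ext s
  show f.map ((ρ_ b).inv ≫ (ρ_ b).hom) s = s
  simp [kUnit, kCounit, types_comp, FunctorToTypes.map_id_apply]

theorem kCounit_kUnit (f : A ⥤ Type u) (b : A) :
    kCounit f b ≫ kUnit f b = 𝟙 _ := by
  ext e
  induction e using Quot.ind with
  | _ e =>
    obtain ⟨X, k, s⟩ := e
    show (Quot.mk (KRel f (𝟙_ A) b) ⟨b, (ρ_ b).hom, f.map ((ρ_ X).inv ≫ k) s⟩ :
        kObj f (𝟙_ A) b) = Quot.mk _ ⟨X, k, s⟩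
    have : (Quot.mk (KRel f (𝟙_ A) b) ⟨X, ((((ρ_ X).inv ≫ k) ▷ 𝟙_ A) ≫ (ρ_ b).hom), s⟩ :
        kObj f (𝟙_ A) b) = Quot.mk _ ⟨b, (ρ_ b).hom, f.map ((ρ_ X).inv ≫ k) s⟩ :=
      Quot.sound (KRel.step ((ρ_ X).inv ≫ k) (ρ_ b).hom s)
    rw [← this]
    congr 1
    have : (((ρ_ X).inv ≫ k) ▷ 𝟙_ A) ≫ (ρ_ b).hom = (ρ_ X).hom ≫ (ρ_ X).inv ≫ k := by
      rw [rightUnitor_naturality]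
    simp only [this, Iso.hom_inv_id_assoc]

instance kUnit_isIso (f : A ⥤ Type u) (b : A) : IsIso (kUnit f b) :=
  ⟨kCounit f b, kUnit_kCounit f b, kCounit_kUnit f b⟩

/-- The Cayley transform `K̄ : (A ⥤ Type) ⥤ (Aᵒᵖ × A ⥤ Type)`,
`K̄(f)(a,b) = (Lan_{(− ⊗ a)} f)(b) = ∫^x A(x ⊗ a, b) × f(x)`, is conservative:
if a natural transformation `α : f ⟶ g` of functors `A ⥤ Type` has `K̄(α)` an
isomorphism, then `α` is an isomorphism. -/
theorem Kbar_conservative {f g : A ⥤ Type u} (α : f ⟶ g)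
    (H : IsIso ((Kbar A).map α)) : IsIso α := by
  have : ∀ b : A, IsIso (α.app b) := by
    intro b
    have key : α.app b =
        kUnit f b ≫ ((Kbar A).map α).app (Opposite.op (𝟙_ A), b) ≫ kCounit g b := by
      ext s
      show α.app b s = kCounit g b
        ((((Kbar A).map α).app (Opposite.op (𝟙_ A), b) : kObj f (𝟙_ A) b → kObj g (𝟙_ A) b)
          (kUnit f b s))
      show α.app b s = g.map ((ρ_ b).inv ≫ (ρ_ b).hom) (α.app b s)
      simp [FunctorToTypes.map_id_apply]
    rw [key]
    have : IsIso (((Kbar A).map α).app (Opposite.op (𝟙_ A), b)) := inferInstance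
    have : IsIso (kCounit g b) := ⟨kUnit g b, kCounit_kUnit g b, kUnit_kCounit g b⟩
    exact IsIso.comp_isIso' (kUnit_isIso f b) (IsIso.comp_isIso' (by assumption) this)
  exact NatIso.isIso_of_isIso_app α
end
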